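/- arXiv:2206.11214 — 2 statements merged into one kernel-verified Lean document; each statement's English description precedes it below -/
import Mathlib

section
/- Define Y₀ = 1 and, for t ≥ 1, Y_t = Y_{t−1} · exp(ψ(X_t/α)) · exp(−(μ_t/α + M/(2α²))). Then (Y_t)_{t=0}^n is a nonnegative supermartingale with respect to the filtration (F_t), i.e., E[Y_t | F_{t−1}] ≤ Y_{t−1} almost surely for every t ∈ [n]; in particular E[Y_n] ≤ 1. -/
open MeasureTheory Finset


lemma integrable_mul_of_condexp_le
    {Ω : Type*} {m m0 : MeasurableSpace Ω} (hm : m ≤ m0) {μ : Measure Ω}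
    [IsFiniteMeasure μ] {f g : Ω → ℝ} (hf_meas : StronglyMeasurable[m] f)
    (hf_int : Integrable f μ) (hf_nn : ∀ ω, 0 ≤ f ω)
    (hg_meas : AEStronglyMeasurable g μ) (hg_int : Integrable g μ)
    (hg_nn : ∀ ω, 0 ≤ g ω) {K : ℝ} (hK0 : 0 ≤ K)
    (hK : ∀ᵐ ω ∂μ, (μ[g|m]) ω ≤ K) :
    Integrable (fun ω => f ω * g ω) μ := by
  set fN : ℕ → Ω → ℝ := fun N ω => min (f ω) N with hfN_def
  have hfN_meas : ∀ N, StronglyMeasurable[m] (fN N) := fun N =>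
    (hf_meas.measurable.min measurable_const).stronglyMeasurable
  have hfN_nn : ∀ N ω, 0 ≤ fN N ω := fun N ω => le_min (hf_nn ω) (Nat.cast_nonneg N)
  have hfN_le : ∀ N ω, fN N ω ≤ f ω := fun N ω => min_le_left _ _
  have hfN_bd : ∀ N ω, ‖fN N ω‖ ≤ N := fun N ω => by
    rw [Real.norm_eq_abs, abs_of_nonneg (hfN_nn N ω)]; exact min_le_right _ _
  have hfNg_int : ∀ N, Integrable (fun ω => fN N ω * g ω) μ := fun N =>
    hg_int.bdd_mul ((hfN_meas N).mono hm).aestronglyMeasurable (ae_of_all _ (hfN_bd N))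
  have hint_bound : ∀ N, ∫ ω, fN N ω * g ω ∂μ ≤ K * ∫ ω, f ω ∂μ := by
    intro N
    have hpull : μ[fun ω => fN N ω * g ω|m] =ᵐ[μ] fun ω => fN N ω * (μ[g|m]) ω :=
      condExp_mul_of_stronglyMeasurable_left (hfN_meas N) (hfNg_int N) hg_int
    have h2 : Integrable (fun ω => fN N ω * (μ[g|m]) ω) μ :=
      integrable_condExp.bdd_mul ((hfN_meas N).mono hm).aestronglyMeasurable (ae_of_all _ (hfN_bd N))
    have h3 : ∀ᵐ ω ∂μ, fN N ω * (μ[g|m]) ω ≤ K * f ω := by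
      filter_upwards [hK, condExp_nonneg (μ := μ) (m := m)
        (ae_of_all _ hg_nn)] with ω h1 h5
      calc fN N ω * (μ[g|m]) ω ≤ fN N ω * K :=
            mul_le_mul_of_nonneg_left h1 (hfN_nn N ω)
        _ ≤ f ω * K := mul_le_mul_of_nonneg_right (hfN_le N ω) hK0
        _ = K * f ω := mul_comm _ _
    calc ∫ ω, fN N ω * g ω ∂μ
        = ∫ ω, (μ[fun ω => fN N ω * g ω|m]) ω ∂μ := (integral_condExp hm).symm
      _ = ∫ ω, fN N ω * (μ[g|m]) ω ∂μ := integral_congr_ae hpull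
      _ ≤ ∫ ω, K * f ω ∂μ := integral_mono_ae h2 (hf_int.const_mul K) h3
      _ = K * ∫ ω, f ω ∂μ := integral_const_mul K f
  have key : ∫⁻ ω, ENNReal.ofReal (f ω * g ω) ∂μ ≤ ENNReal.ofReal (K * ∫ ω, f ω ∂μ) := by
    have hsup : ∀ ω, (⨆ N : ℕ, ENNReal.ofReal (fN N ω * g ω)) = ENNReal.ofReal (f ω * g ω) := by
      intro ω
      apply le_antisymm
      · exact iSup_le fun N => ENNReal.ofReal_le_ofReal
          (mul_le_mul_of_nonneg_right (hfN_le N ω) (hg_nn ω))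
      · have hN : fN ⌈f ω⌉₊ ω = f ω := min_eq_left (Nat.le_ceil _)
        calc ENNReal.ofReal (f ω * g ω) = ENNReal.ofReal (fN ⌈f ω⌉₊ ω * g ω) := by rw [hN]
          _ ≤ ⨆ N : ℕ, ENNReal.ofReal (fN N ω * g ω) := le_iSup (fun N => ENNReal.ofReal (fN N ω * g ω)) _
    have hmeasN : ∀ N : ℕ, AEMeasurable (fun ω => ENNReal.ofReal (fN N ω * g ω)) μ :=
      fun N => ENNReal.measurable_ofReal.comp_aemeasurable
        (((hfN_meas N).mono hm).measurable.aemeasurable.mul hg_meas.aemeasurable)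
    have hmono : ∀ᵐ ω ∂μ, Monotone fun N : ℕ => ENNReal.ofReal (fN N ω * g ω) := by
      refine ae_of_all _ fun ω a b hab => ENNReal.ofReal_le_ofReal ?_
      exact mul_le_mul_of_nonneg_right
        (min_le_min le_rfl (Nat.cast_le.mpr hab)) (hg_nn ω)
    calc ∫⁻ ω, ENNReal.ofReal (f ω * g ω) ∂μ
        = ∫⁻ ω, ⨆ N : ℕ, ENNReal.ofReal (fN N ω * g ω) ∂μ := by simp_rw [hsup]
      _ = ⨆ N : ℕ, ∫⁻ ω, ENNReal.ofReal (fN N ω * g ω) ∂μ := lintegral_iSup' hmeasN hmono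
      _ ≤ ENNReal.ofReal (K * ∫ ω, f ω ∂μ) := by
          refine iSup_le fun N => ?_
          rw [← ofReal_integral_eq_lintegral_ofReal (hfNg_int N)
            (ae_of_all _ fun ω => mul_nonneg (hfN_nn N ω) (hg_nn ω))]
          exact ENNReal.ofReal_le_ofReal (hint_bound N)
  refine ⟨(hf_meas.mono hm).aestronglyMeasurable.mul hg_meas, ?_⟩
  rw [hasFiniteIntegral_iff_ofReal (ae_of_all _ fun ω => mul_nonneg (hf_nn ω) (hg_nn ω))]
  exact lt_of_le_of_lt key ENNReal.ofReal_lt_top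



/-- **Supermartingale construction.** With `Y_0 = 1` and
`Y_t = Y_{t−1} · exp(ψ(X_t/α)) · exp(−(μ_t/α + M/(2α²)))`, i.e.
`Y_t ω = ∏_{s=1}^t exp(ψ(X_s ω/α)) · exp(−(μ_s/α + M/(2α²)))`, the process `(Y_t)_{t≤n}` is
nonnegative, satisfies `E[Y_t | ℱ_{t−1}] ≤ Y_{t−1}` a.s. for every `t ∈ [n]`, and
`E[Y_n] ≤ 1`. -/
theorem catoni_supermartingale
    {Ω : Type*} {m0 : MeasurableSpace Ω} (P : Measure Ω) [IsProbabilityMeasure P]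
    (ℱ : Filtration ℕ m0) (n : ℕ)
    (X : ℕ → Ω → ℝ) (μt : ℕ → ℝ) (M : ℝ) (hM : 0 < M)
    (hAdapted : ∀ s, StronglyMeasurable[ℱ s] (X s))
    (hInt : ∀ t ∈ Finset.Icc 1 n, Integrable (X t) P)
    (hInt2 : ∀ t ∈ Finset.Icc 1 n, Integrable (fun ω => (X t ω) ^ 2) P)
    (hC1 : ∀ t ∈ Finset.Icc 1 n, P[X t|ℱ (t - 1)] =ᵐ[P] fun _ => μt t)
    (hC2 : ∀ t ∈ Finset.Icc 1 n,
      ∀ᵐ ω ∂P, (P[fun ω => (X t ω) ^ 2|ℱ (t - 1)]) ω ≤ M)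
    (ψ : ℝ → ℝ) (hψmeas : Measurable ψ)
    (hψub : ∀ x : ℝ, ψ x ≤ Real.log (1 + x + x ^ 2 / 2))
    (α : ℝ) (hα : 0 < α)
    (Y : ℕ → Ω → ℝ) (hY0 : ∀ ω, Y 0 ω = 1)
    (hYrec : ∀ t ∈ Finset.Icc 1 n, ∀ ω,
      Y t ω = Y (t - 1) ω * Real.exp (ψ (X t ω / α)) *
        Real.exp (-(μt t / α + M / (2 * α ^ 2)))) :
    (∀ t ≤ n, ∀ ω, 0 ≤ Y t ω) ∧
    (∀ t ∈ Finset.Icc 1 n,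
      ∀ᵐ ω ∂P, (P[Y t|ℱ (t - 1)]) ω ≤ Y (t - 1) ω) ∧
    ∫ ω, Y n ω ∂P ≤ 1 := by
  have hα2 : (0:ℝ) < 2 * α ^ 2 := by positivity
  set g : ℕ → Ω → ℝ := fun t ω => Real.exp (ψ (X t ω / α)) with hg_def
  set c : ℕ → ℝ := fun t => Real.exp (-(μt t / α + M / (2 * α ^ 2))) with hc_def
  set h : ℕ → Ω → ℝ := fun t ω => 1 + X t ω / α + (X t ω) ^ 2 / (2 * α ^ 2) with hh_def
  set K : ℕ → ℝ := fun t => 1 + μt t / α + M / (2 * α ^ 2) with hK_def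
  have hpos : ∀ x : ℝ, 0 < 1 + x + x ^ 2 / 2 := fun x => by nlinarith [sq_nonneg (x + 1)]
  have hsq : ∀ t ω, (X t ω / α) ^ 2 / 2 = (X t ω) ^ 2 / (2 * α ^ 2) := by
    intro t ω; rw [div_pow, div_div, mul_comm]
  have hh_pos : ∀ t ω, 0 < h t ω := by
    intro t ω
    have := hpos (X t ω / α)
    rw [hsq t ω] at this
    simpa [hh_def] using this
  have hgle : ∀ t ω, g t ω ≤ h t ω := by
    intro t ω
    have h1 : g t ω ≤ 1 + X t ω / α + (X t ω / α) ^ 2 / 2 := by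
      calc g t ω ≤ Real.exp (Real.log (1 + X t ω / α + (X t ω / α) ^ 2 / 2)) :=
            Real.exp_le_exp.mpr (hψub _)
        _ = 1 + X t ω / α + (X t ω / α) ^ 2 / 2 := Real.exp_log (hpos _)
    rwa [hsq t ω] at h1
  have hg_sm : ∀ t, StronglyMeasurable[ℱ t] (g t) := fun t =>
    (Real.measurable_exp.comp (hψmeas.comp
      ((hAdapted t).measurable.div_const α))).stronglyMeasurable
  have hg_nn : ∀ t ω, 0 ≤ g t ω := fun t ω => (Real.exp_pos _).le
  have hc_pos : ∀ t, 0 < c t := fun t => Real.exp_pos _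
  have hcK : ∀ t, c t * K t ≤ 1 := by
    intro t
    have h1 : K t ≤ Real.exp (μt t / α + M / (2 * α ^ 2)) := by
      have := Real.add_one_le_exp (μt t / α + M / (2 * α ^ 2))
      simp only [hK_def]; linarith
    calc c t * K t ≤ c t * Real.exp (μt t / α + M / (2 * α ^ 2)) :=
          mul_le_mul_of_nonneg_left h1 (hc_pos t).le
      _ = 1 := by rw [hc_def, ← Real.exp_add, neg_add_cancel, Real.exp_zero]
  -- per-time-step facts
  have step : ∀ t ∈ Finset.Icc 1 n, (∀ ω, 0 ≤ Y (t-1) ω) →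
      StronglyMeasurable[ℱ (t-1)] (Y (t-1)) → Integrable (Y (t-1)) P →
      Integrable (Y t) P ∧ (∀ᵐ ω ∂P, (P[Y t|ℱ (t-1)]) ω ≤ Y (t-1) ω) ∧
        ∫ ω, Y t ω ∂P ≤ ∫ ω, Y (t-1) ω ∂P := by
    intro t ht hnn hsm hint
    have hm : ℱ (t-1) ≤ m0 := ℱ.le _
    have hh_int : Integrable (h t) P := by
      have : Integrable (fun ω => 1 + X t ω / α + (X t ω) ^ 2 / (2 * α ^ 2)) P :=
        ((integrable_const (1:ℝ)).add ((hInt t ht).div_const α)).add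
          ((hInt2 t ht).div_const (2 * α ^ 2))
      simpa [hh_def] using this
    have hg_int : Integrable (g t) P := by
      refine hh_int.mono ((hg_sm t).mono (ℱ.le t)).aestronglyMeasurable
        (ae_of_all _ fun ω => ?_)
      rw [Real.norm_eq_abs, Real.norm_eq_abs, abs_of_nonneg (hg_nn t ω),
        abs_of_nonneg (hh_pos t ω).le]
      exact hgle t ω
    -- conditional expectation of h
    have hch : P[h t|ℱ (t-1)] =ᵐ[P]
        fun ω => 1 + (P[X t|ℱ (t-1)]) ω / α
          + (P[fun ω => (X t ω) ^ 2|ℱ (t-1)]) ω / (2 * α ^ 2) := by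
      have e1 : h t = (fun _ => (1:ℝ)) + (α⁻¹ • X t + (2 * α ^ 2)⁻¹ • fun ω => (X t ω) ^ 2) := by
        funext ω
        simp only [hh_def, Pi.add_apply, Pi.smul_apply, smul_eq_mul]
        ring
      have i1 : Integrable (α⁻¹ • X t) P := (hInt t ht).smul α⁻¹
      have i2 : Integrable ((2 * α ^ 2)⁻¹ • fun ω => (X t ω) ^ 2) P := (hInt2 t ht).smul _
      have c1 : P[h t|ℱ (t-1)] =ᵐ[P]
          P[(fun _ => (1:ℝ))|ℱ (t-1)] + P[α⁻¹ • X t + (2 * α ^ 2)⁻¹ • fun ω => (X t ω) ^ 2|ℱ (t-1)] := by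
        rw [e1]; exact condExp_add (integrable_const 1) (i1.add i2) _
      have c2 : P[α⁻¹ • X t + (2 * α ^ 2)⁻¹ • fun ω => (X t ω) ^ 2|ℱ (t-1)] =ᵐ[P]
          P[α⁻¹ • X t|ℱ (t-1)] + P[(2 * α ^ 2)⁻¹ • fun ω => (X t ω) ^ 2|ℱ (t-1)] :=
        condExp_add i1 i2 _
      have c3 : P[α⁻¹ • X t|ℱ (t-1)] =ᵐ[P] α⁻¹ • P[X t|ℱ (t-1)] := condExp_smul _ _ _
      have c4 : P[(2 * α ^ 2)⁻¹ • fun ω => (X t ω) ^ 2|ℱ (t-1)] =ᵐ[P]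
          (2 * α ^ 2)⁻¹ • P[fun ω => (X t ω) ^ 2|ℱ (t-1)] := condExp_smul _ _ _
      have c5 : P[(fun _ => (1:ℝ))|ℱ (t-1)] = fun _ => (1:ℝ) := condExp_const hm 1
      filter_upwards [c1, c2, c3, c4] with ω e1' e2' e3' e4'
      rw [e1']
      simp only [Pi.add_apply, c5, Pi.smul_apply, smul_eq_mul] at *
      rw [e2', e3', e4']
      ring
    have hcondg : ∀ᵐ ω ∂P, 0 ≤ (P[g t|ℱ (t-1)]) ω ∧ (P[g t|ℱ (t-1)]) ω ≤ K t := by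
      have m1 := condExp_mono (μ := P) (m := ℱ (t-1)) hg_int hh_int
        (ae_of_all _ fun ω => hgle t ω)
      have m5 := condExp_nonneg (μ := P) (m := ℱ (t-1)) (ae_of_all _ (hg_nn t))
      filter_upwards [m1, hch, hC1 t ht, hC2 t ht, m5] with ω h1 h2 h3 h4 h5
      refine ⟨h5, ?_⟩
      rw [h2, h3] at h1
      have hd : (P[fun ω => (X t ω) ^ 2|ℱ (t-1)]) ω / (2 * α ^ 2) ≤ M / (2 * α ^ 2) :=
        (div_le_div_iff_of_pos_right hα2).mpr h4
      simp only [hK_def]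
      linarith
    have hKnn : 0 ≤ K t := by
      obtain ⟨ω, h0, hKle⟩ := hcondg.exists
      linarith
    have hKle : ∀ᵐ ω ∂P, (P[g t|ℱ (t-1)]) ω ≤ K t := hcondg.mono fun ω hω => hω.2
    have hfg_int : Integrable (fun ω => Y (t-1) ω * g t ω) P :=
      integrable_mul_of_condexp_le hm hsm hint hnn
        ((hg_sm t).mono (ℱ.le t)).aestronglyMeasurable hg_int (hg_nn t) hKnn hKle
    have hYt_eq : Y t = fun ω => c t * (Y (t-1) ω * g t ω) := by
      funext ω; rw [hYrec t ht ω]; ring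
    have hYt_int : Integrable (Y t) P := by rw [hYt_eq]; exact hfg_int.const_mul _
    have hpull : P[Y t|ℱ (t-1)] =ᵐ[P] fun ω => c t * (Y (t-1) ω * (P[g t|ℱ (t-1)]) ω) := by
      have h1 : P[Y t|ℱ (t-1)] =ᵐ[P] c t • P[fun ω => Y (t-1) ω * g t ω|ℱ (t-1)] := by
        rw [hYt_eq]
        exact condExp_smul (c t) (fun ω => Y (t-1) ω * g t ω) _
      have h2 : P[fun ω => Y (t-1) ω * g t ω|ℱ (t-1)] =ᵐ[P]
          fun ω => Y (t-1) ω * (P[g t|ℱ (t-1)]) ω :=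
        condExp_mul_of_stronglyMeasurable_left hsm hfg_int hg_int
      refine h1.trans ?_
      filter_upwards [h2] with ω hω
      simp only [Pi.smul_apply, smul_eq_mul, hω]
    have hle : ∀ᵐ ω ∂P, (P[Y t|ℱ (t-1)]) ω ≤ Y (t-1) ω := by
      filter_upwards [hpull, hcondg] with ω h1 h2
      rw [h1]
      calc c t * (Y (t-1) ω * (P[g t|ℱ (t-1)]) ω)
          ≤ c t * (Y (t-1) ω * K t) := by
            exact mul_le_mul_of_nonneg_left
              (mul_le_mul_of_nonneg_left h2.2 (hnn ω)) (hc_pos t).le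
        _ = (c t * K t) * Y (t-1) ω := by ring
        _ ≤ 1 * Y (t-1) ω := mul_le_mul_of_nonneg_right (hcK t) (hnn ω)
        _ = Y (t-1) ω := one_mul _
    refine ⟨hYt_int, hle, ?_⟩
    rw [← integral_condExp hm (f := Y t)]
    exact integral_mono_ae integrable_condExp hint hle
  -- induction
  have main : ∀ t, t ≤ n → (∀ ω, 0 ≤ Y t ω) ∧ StronglyMeasurable[ℱ t] (Y t)
      ∧ Integrable (Y t) P ∧ ∫ ω, Y t ω ∂P ≤ 1 := by
    intro t
    induction t with
    | zero =>
      intro _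
      have hY0' : Y 0 = fun _ => (1:ℝ) := funext hY0
      refine ⟨fun ω => by rw [hY0 ω]; norm_num, ?_, ?_, ?_⟩
      · rw [hY0']; exact stronglyMeasurable_const
      · rw [hY0']; exact integrable_const 1
      · rw [hY0']; simp
    | succ s ih =>
      intro hsn
      have hs : s ≤ n := le_trans (Nat.le_succ s) hsn
      obtain ⟨ihnn, ihsm, ihint, ihI⟩ := ih hs
      have hmem : s + 1 ∈ Finset.Icc 1 n := Finset.mem_Icc.mpr ⟨Nat.succ_le_succ (Nat.zero_le s), hsn⟩
      have hsub : s + 1 - 1 = s := Nat.succ_sub_one s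
      obtain ⟨hint', _, hI'⟩ := step (s+1) hmem (by rw [hsub]; exact ihnn)
        (by rw [hsub]; exact ihsm) (by rw [hsub]; exact ihint)
      rw [hsub] at hI'
      have hnn' : ∀ ω, 0 ≤ Y (s+1) ω := by
        intro ω
        rw [hYrec (s+1) hmem ω, hsub]
        exact mul_nonneg (mul_nonneg (ihnn ω) (Real.exp_pos _).le) (Real.exp_pos _).le
      have hsm' : StronglyMeasurable[ℱ (s+1)] (Y (s+1)) := by
        have e : Y (s+1) = fun ω => Y s ω * g (s+1) ω * c (s+1) := by
          funext ω; rw [hYrec (s+1) hmem ω, hsub]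
        rw [e]
        exact ((ihsm.mono (ℱ.mono (Nat.le_succ s))).mul (hg_sm (s+1))).mul_const _
      exact ⟨hnn', hsm', hint', le_trans hI' ihI⟩
  refine ⟨fun t htn ω => (main t htn).1 ω, fun t ht => ?_, (main n le_rfl).2.2.2⟩
  have htn : t ≤ n := (Finset.mem_Icc.mp ht).2
  obtain ⟨hnn, hsm, hint, _⟩ := main (t-1) (le_trans (Nat.sub_le t 1) htn)
  exact (step t ht hnn hsm hint).2.1
end

section
/- Let {X_t}_{t∈[n]} satisfy conditions C1 and C2, let ψ satisfy ψ(x) ≤ log(1 + x + x²/2) for all x, let α > 0 and δ ∈ (0,1), and let μ̂ = (α/n)·Σ_{i=1}^n ψ(X_i/α). Then P( μ̂ − μ ≥ M/(2α) + (α/n)·log(2/δ) ) ≤ δ/2. -/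
open MeasureTheory Finset

/-- Key step: multiplying a nonnegative `m`-measurable integrable function by a nonnegative
integrable function whose conditional expectation is bounded by `c`. -/
private lemma catoni_key_step {Ω : Type*} {m0 : MeasurableSpace Ω} (P : Measure Ω)
    [IsProbabilityMeasure P] {m : MeasurableSpace Ω} (hm : m ≤ m0) {F h : Ω → ℝ} {c : ℝ}
    (hc0 : 0 ≤ c)
    (hF : StronglyMeasurable[m] F) (hF0 : ∀ ω, 0 ≤ F ω) (hFint : Integrable F P)
    (hh : Integrable h P) (hh0 : ∀ ω, 0 ≤ h ω)
    (hc : P[h|m] ≤ᵐ[P] fun _ => c) :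
    Integrable (fun ω => F ω * h ω) P ∧ ∫ ω, F ω * h ω ∂P ≤ c * ∫ ω, F ω ∂P := by
  have hmF : AEStronglyMeasurable[m0] F P := (hF.mono hm).aestronglyMeasurable
  set I := ∫ ω, F ω ∂P with hI
  have hI0 : 0 ≤ I := integral_nonneg hF0
  have hFN0 : ∀ (N : ℕ) (ω : Ω), 0 ≤ min (F ω) (N : ℝ) := fun N ω =>
    le_min (hF0 ω) (Nat.cast_nonneg N)
  have hFNint : ∀ N : ℕ, Integrable (fun ω => min (F ω) (N : ℝ)) P := by
    intro N
    refine Integrable.mono hFint ((hmF.inf aestronglyMeasurable_const)) (ae_of_all _ fun ω => ?_)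
    rw [Real.norm_eq_abs, Real.norm_eq_abs, abs_of_nonneg (hFN0 N ω), abs_of_nonneg (hF0 ω)]
    exact min_le_left _ _
  have key : ∀ N : ℕ, ∫ ω, min (F ω) (N : ℝ) * h ω ∂P ≤ c * I := by
    intro N
    have hFN : StronglyMeasurable[m] fun ω => min (F ω) (N : ℝ) :=
      hF.inf stronglyMeasurable_const
    have hFNb : ∀ ω, ‖min (F ω) (N : ℝ)‖ ≤ (N : ℝ) := by
      intro ω
      rw [Real.norm_eq_abs, abs_of_nonneg (hFN0 N ω)]
      exact min_le_right _ _
    have hint : Integrable ((fun ω => min (F ω) (N : ℝ)) * h) P :=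
      hh.bdd_mul (hFN.mono hm).aestronglyMeasurable (c := N) (ae_of_all _ hFNb)
    have hpull : P[(fun ω => min (F ω) (N : ℝ)) * h|m]
        =ᵐ[P] (fun ω => min (F ω) (N : ℝ)) * P[h|m] :=
      condExp_mul_of_stronglyMeasurable_left hFN hint hh
    have hcondint : Integrable (fun ω => min (F ω) (N : ℝ) * (P[h|m]) ω) P :=
      integrable_condExp.bdd_mul (hFN.mono hm).aestronglyMeasurable (c := N) (ae_of_all _ hFNb)
    calc ∫ ω, min (F ω) (N : ℝ) * h ω ∂P
        = ∫ ω, (P[(fun ω => min (F ω) (N : ℝ)) * h|m]) ω ∂P := (integral_condExp hm).symm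
      _ = ∫ ω, min (F ω) (N : ℝ) * (P[h|m]) ω ∂P := integral_congr_ae hpull
      _ ≤ ∫ ω, min (F ω) (N : ℝ) * c ∂P := by
          refine integral_mono_ae hcondint ((hFNint N).mul_const c) ?_
          filter_upwards [hc] with ω hω
          exact mul_le_mul_of_nonneg_left hω (hFN0 N ω)
      _ = c * ∫ ω, min (F ω) (N : ℝ) ∂P := by rw [integral_mul_const]; ring
      _ ≤ c * I := by
          refine mul_le_mul_of_nonneg_left ?_ hc0
          exact integral_mono (hFNint N) hFint fun ω => min_le_left _ _
  -- monotone convergence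
  have hmono : ∀ ω, Monotone fun N : ℕ => ENNReal.ofReal (min (F ω) (N : ℝ) * h ω) := by
    intro ω i j hij
    exact ENNReal.ofReal_le_ofReal
      (mul_le_mul_of_nonneg_right (min_le_min le_rfl (Nat.cast_le.2 hij)) (hh0 ω))
  have htend : ∀ ω, Filter.Tendsto (fun N : ℕ => ENNReal.ofReal (min (F ω) (N : ℝ) * h ω))
      Filter.atTop (nhds (ENNReal.ofReal (F ω * h ω))) := by
    intro ω
    refine tendsto_atTop_of_eventually_const (i₀ := ⌈F ω⌉₊) fun N hN => ?_
    have : F ω ≤ (N : ℝ) := (Nat.le_ceil (F ω)).trans (Nat.cast_le.2 hN)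
    rw [min_eq_left this]
  have hmeasN : ∀ N : ℕ, AEMeasurable (fun ω => ENNReal.ofReal (min (F ω) (N : ℝ) * h ω)) P := by
    intro N
    exact ENNReal.measurable_ofReal.comp_aemeasurable
      (((hmF.inf aestronglyMeasurable_const).mul hh.1).aemeasurable)
  have hL := lintegral_tendsto_of_tendsto_of_monotone hmeasN
    (ae_of_all _ hmono) (ae_of_all _ htend)
  have hfin : ∫⁻ ω, ENNReal.ofReal (F ω * h ω) ∂P ≤ ENNReal.ofReal (c * I) := by
    refine le_of_tendsto hL (Filter.Eventually.of_forall fun N => ?_)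
    have hintN : Integrable (fun ω => min (F ω) (N : ℝ) * h ω) P :=
      hh.bdd_mul ((hF.inf stronglyMeasurable_const).mono hm).aestronglyMeasurable
        (c := N) (ae_of_all _ fun ω => by rw [Real.norm_eq_abs, abs_of_nonneg (hFN0 N ω)]; exact min_le_right _ _)
    rw [← ofReal_integral_eq_lintegral_ofReal hintN
      (ae_of_all _ fun ω => mul_nonneg (hFN0 N ω) (hh0 ω))]
    exact ENNReal.ofReal_le_ofReal (key N)
  have hFh_meas : AEStronglyMeasurable[m0] (fun ω => F ω * h ω) P := hmF.mul hh.1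
  have hFh_nn : 0 ≤ᵐ[P] fun ω => F ω * h ω :=
    ae_of_all _ fun ω => mul_nonneg (hF0 ω) (hh0 ω)
  have hint_Fh : Integrable (fun ω => F ω * h ω) P := by
    refine ⟨hFh_meas, ?_⟩
    rw [hasFiniteIntegral_iff_ofReal hFh_nn]
    exact lt_of_le_of_lt hfin ENNReal.ofReal_lt_top
  refine ⟨hint_Fh, ?_⟩
  rw [integral_eq_lintegral_of_nonneg_ae hFh_nn hFh_meas]
  have h2 := ENNReal.toReal_mono ENNReal.ofReal_ne_top hfin
  rwa [ENNReal.toReal_ofReal (mul_nonneg hc0 hI0)] at h2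

/-- **One-sided deviation bound.** Under C1, C2, with `ψ(x) ≤ log(1 + x + x²/2)`, for `α > 0`
and `δ ∈ (0,1)`, the estimator `μ̂ = (α/n) ∑ ψ(X_i/α)` satisfies
`P( μ̂ − μ ≥ M/(2α) + (α/n) log(2/δ) ) ≤ δ/2`. -/
theorem catoni_one_sided_deviation
    {Ω : Type*} {m0 : MeasurableSpace Ω} (P : Measure Ω) [IsProbabilityMeasure P]
    (ℱ : Filtration ℕ m0) (n : ℕ) (hn : 0 < n)
    (X : ℕ → Ω → ℝ) (μt : ℕ → ℝ) (M : ℝ) (hM : 0 < M)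
    (hAdapted : ∀ t, StronglyMeasurable[ℱ t] (X t))
    (hInt : ∀ t ∈ Finset.Icc 1 n, Integrable (X t) P)
    (hInt2 : ∀ t ∈ Finset.Icc 1 n, Integrable (fun ω => (X t ω) ^ 2) P)
    -- C1 : conditional mean
    (hC1 : ∀ t ∈ Finset.Icc 1 n, P[X t|ℱ (t - 1)] =ᵐ[P] fun _ => μt t)
    -- C2 : conditional second moment bound
    (hC2 : ∀ t ∈ Finset.Icc 1 n,
      ∀ᵐ ω ∂P, (P[fun ω => (X t ω) ^ 2|ℱ (t - 1)]) ω ≤ M)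
    -- influence function : upper bound only
    (ψ : ℝ → ℝ) (hψmeas : Measurable ψ)
    (hψub : ∀ x : ℝ, ψ x ≤ Real.log (1 + x + x ^ 2 / 2))
    (α : ℝ) (hα : 0 < α) (δ : ℝ) (hδ : δ ∈ Set.Ioo (0 : ℝ) 1)
    (μbar : ℝ) (hμbar : μbar = (1 / n) * ∑ t ∈ Finset.Icc 1 n, μt t) :
    P {ω | (α / n) * ∑ i ∈ Finset.Icc 1 n, ψ (X i ω / α) - μbar ≥
        M / (2 * α) + (α / n) * Real.log (2 / δ)} ≤ ENNReal.ofReal (δ / 2) := by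
  obtain ⟨hδ0, hδ1⟩ := hδ
  have hα0 : (α : ℝ) ≠ 0 := ne_of_gt hα
  have hn' : (0 : ℝ) < n := by exact_mod_cast hn
  set β : ℝ := (2 * α ^ 2)⁻¹ with hβ
  have hβ0 : 0 ≤ β := by positivity
  set W : ℕ → Ω → ℝ := fun t ω => Real.exp (ψ (X t ω / α)) with hW
  set g : ℕ → Ω → ℝ := fun t ω => 1 + α⁻¹ * X t ω + β * (X t ω) ^ 2 with hg
  set c : ℕ → ℝ := fun t => 1 + α⁻¹ * μt t + β * M with hc
  have hβsq : ∀ x : ℝ, β * x ^ 2 = (α⁻¹ * x) ^ 2 / 2 := by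
    intro x; rw [hβ]; ring
  have hgpos : ∀ t ω, (1 : ℝ) / 2 ≤ g t ω := by
    intro t ω
    have h1 := hβsq (X t ω)
    simp only [hg]
    nlinarith [sq_nonneg (α⁻¹ * X t ω + 1)]
  have hWg : ∀ t ω, W t ω ≤ g t ω := by
    intro t ω
    have harg : g t ω = 1 + X t ω / α + (X t ω / α) ^ 2 / 2 := by
      simp only [hg]; rw [hβ]; ring
    have hpos : (0 : ℝ) < 1 + X t ω / α + (X t ω / α) ^ 2 / 2 := by
      rw [← harg]; exact lt_of_lt_of_le one_half_pos (hgpos t ω)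
    calc W t ω ≤ Real.exp (Real.log (1 + X t ω / α + (X t ω / α) ^ 2 / 2)) :=
          Real.exp_le_exp.2 (hψub (X t ω / α))
      _ = 1 + X t ω / α + (X t ω / α) ^ 2 / 2 := Real.exp_log hpos
      _ = g t ω := harg.symm
  have hW0 : ∀ t ω, 0 ≤ W t ω := fun t ω => (Real.exp_pos _).le
  have hWmeas : ∀ t, StronglyMeasurable[ℱ t] (W t) := by
    intro t
    exact (Real.measurable_exp.comp (hψmeas.comp
      ((hAdapted t).measurable.div_const α))).stronglyMeasurable
  have hgint : ∀ t ∈ Finset.Icc 1 n, Integrable (g t) P := by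
    intro t ht
    have := ((integrable_const (1 : ℝ)).add ((hInt t ht).const_mul α⁻¹)).add
      ((hInt2 t ht).const_mul β)
    exact this
  -- conditional expectation bound for g
  have hcond : ∀ t ∈ Finset.Icc 1 n, P[g t|ℱ (t - 1)] ≤ᵐ[P] fun _ => c t := by
    intro t ht
    have e0 : g t = (fun _ => (1 : ℝ)) + (α⁻¹ • X t + β • fun ω => (X t ω) ^ 2) := by
      funext ω; simp [hg, smul_eq_mul]; ring
    have hint1 : Integrable (α⁻¹ • X t) P := (hInt t ht).smul α⁻¹
    have hint2 : Integrable (β • fun ω => (X t ω) ^ 2) P := (hInt2 t ht).smul β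
    have h1 := condExp_add (μ := P) (m := ℱ (t - 1)) (integrable_const (1 : ℝ))
      (hint1.add hint2)
    have h2 := condExp_add (μ := P) (m := ℱ (t - 1)) hint1 hint2
    have h3 := condExp_smul (μ := P) (m := ℱ (t - 1)) α⁻¹ (X t)
    have h4 := condExp_smul (μ := P) (m := ℱ (t - 1)) β (fun ω => (X t ω) ^ 2)
    have h5 := condExp_const (μ := P) (ℱ.le (t - 1)) (1 : ℝ)
    filter_upwards [h1, h2, h3, h4, hC1 t ht, hC2 t ht] with ω e1 e2 e3 e4 e5 e6
    rw [e0]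
    have : (P[(fun _ => (1 : ℝ)) + (α⁻¹ • X t + β • fun ω => (X t ω) ^ 2)|ℱ (t - 1)]) ω
        = 1 + α⁻¹ * μt t + β * (P[fun ω => (X t ω) ^ 2|ℱ (t - 1)]) ω := by
      rw [e1]
      simp only [Pi.add_apply, e2, h5, Pi.smul_apply, e3, e4, smul_eq_mul, e5]
      rw [add_assoc]
    rw [this]
    have : β * (P[fun ω => (X t ω) ^ 2|ℱ (t - 1)]) ω ≤ β * M :=
      mul_le_mul_of_nonneg_left e6 hβ0
    simp only [hc]; linarith
  -- positivity of c
  have hcpos : ∀ t ∈ Finset.Icc 1 n, (0 : ℝ) ≤ c t := by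
    intro t ht
    have h0 : P[fun _ => (1 : ℝ) / 2|ℱ (t - 1)] ≤ᵐ[P] P[g t|ℱ (t - 1)] :=
      condExp_mono (integrable_const _) (hgint t ht) (ae_of_all _ fun ω => hgpos t ω)
    have h1 : ∀ᵐ ω ∂P, (1 : ℝ) / 2 ≤ c t := by
      filter_upwards [h0, hcond t ht] with ω e0 e1
      have := condExp_const (μ := P) (ℱ.le (t - 1)) ((1 : ℝ) / 2)
      rw [this] at e0
      exact le_trans e0 e1
    haveI : (ae P).NeBot := ae_neBot.2 (IsProbabilityMeasure.ne_zero P)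
    obtain ⟨ω, hω⟩ := h1.exists
    exact le_trans one_half_pos.le hω
  -- main induction
  have main : ∀ k, k ≤ n → Integrable (fun ω => ∏ t ∈ Finset.Icc 1 k, W t ω) P ∧
      ∫ ω, ∏ t ∈ Finset.Icc 1 k, W t ω ∂P ≤ ∏ t ∈ Finset.Icc 1 k, c t := by
    intro k
    induction k with
    | zero => intro _; simp
    | succ k ih =>
      intro hk1
      obtain ⟨ihint, ihle⟩ := ih (Nat.le_of_succ_le hk1)
      have hmem : k + 1 ∈ Finset.Icc 1 n := Finset.mem_Icc.2 ⟨Nat.succ_le_succ (Nat.zero_le k), hk1⟩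
      set F : Ω → ℝ := fun ω => ∏ t ∈ Finset.Icc 1 k, W t ω with hF
      have hFmeas : StronglyMeasurable[ℱ k] F := by
        refine Finset.stronglyMeasurable_fun_prod _ fun t ht => ?_
        exact (hWmeas t).mono (ℱ.mono (Finset.mem_Icc.1 ht).2)
      have hF0 : ∀ ω, 0 ≤ F ω := fun ω => Finset.prod_nonneg fun t _ => hW0 t ω
      have hcc : P[g (k + 1)|ℱ k] ≤ᵐ[P] fun _ => c (k + 1) := by
        simpa using hcond _ hmem
      have hkey := catoni_key_step P (ℱ.le k) (hcpos _ hmem) hFmeas hF0 ihint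
        (hgint _ hmem) (fun ω => le_trans (by norm_num) (hgpos (k + 1) ω)) hcc
      obtain ⟨hint_Fg, hle_Fg⟩ := hkey
      have hprod : ∀ ω, ∏ t ∈ Finset.Icc 1 (k + 1), W t ω = F ω * W (k + 1) ω := fun ω =>
        Finset.prod_Icc_succ_top (Nat.succ_le_succ (Nat.zero_le k)) _
      have hPint : Integrable (fun ω => ∏ t ∈ Finset.Icc 1 (k + 1), W t ω) P := by
        refine Integrable.mono hint_Fg ?_ (ae_of_all _ fun ω => ?_)
        · have : StronglyMeasurable[ℱ (k + 1)] fun ω => ∏ t ∈ Finset.Icc 1 (k + 1), W t ω :=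
            Finset.stronglyMeasurable_fun_prod _ fun t ht =>
              (hWmeas t).mono (ℱ.mono (Finset.mem_Icc.1 ht).2)
          exact (this.mono (ℱ.le _)).aestronglyMeasurable
        · rw [hprod ω, Real.norm_eq_abs, Real.norm_eq_abs,
            abs_of_nonneg (mul_nonneg (hF0 ω) (hW0 _ ω)),
            abs_of_nonneg (mul_nonneg (hF0 ω) (le_trans (by norm_num) (hgpos (k + 1) ω)))]
          exact mul_le_mul_of_nonneg_left (hWg (k + 1) ω) (hF0 ω)
      refine ⟨hPint, ?_⟩
      have h6 : ∫ ω, ∏ t ∈ Finset.Icc 1 (k + 1), W t ω ∂P ≤ ∫ ω, F ω * g (k + 1) ω ∂P := by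
        refine integral_mono hPint hint_Fg fun ω => ?_
        rw [hprod ω]
        exact mul_le_mul_of_nonneg_left (hWg (k + 1) ω) (hF0 ω)
      have h7 : c (k + 1) * ∫ ω, F ω ∂P ≤ c (k + 1) * ∏ t ∈ Finset.Icc 1 k, c t :=
        mul_le_mul_of_nonneg_left ihle (hcpos _ hmem)
      have h8 : ∏ t ∈ Finset.Icc 1 (k + 1), c t
          = (∏ t ∈ Finset.Icc 1 k, c t) * c (k + 1) :=
        Finset.prod_Icc_succ_top (Nat.succ_le_succ (Nat.zero_le k)) _
      rw [h8]
      linarith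
  obtain ⟨hIntN, hLeN⟩ := main n le_rfl
  -- bound the expectation by an exponential
  set pre : ℝ := α⁻¹ * (∑ t ∈ Finset.Icc 1 n, μt t) + n * (β * M) with hpre
  have hprod_le : ∏ t ∈ Finset.Icc 1 n, c t ≤ Real.exp pre := by
    have h1 : ∀ t ∈ Finset.Icc 1 n, c t ≤ Real.exp (α⁻¹ * μt t + β * M) := by
      intro t ht
      have := Real.add_one_le_exp (α⁻¹ * μt t + β * M)
      simp only [hc]; linarith
    calc ∏ t ∈ Finset.Icc 1 n, c t
        ≤ ∏ t ∈ Finset.Icc 1 n, Real.exp (α⁻¹ * μt t + β * M) :=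
          Finset.prod_le_prod hcpos h1
      _ = Real.exp (∑ t ∈ Finset.Icc 1 n, (α⁻¹ * μt t + β * M)) := (Real.exp_sum _ _).symm
      _ = Real.exp pre := by
          congr 1
          rw [Finset.sum_add_distrib, Finset.sum_const, ← Finset.mul_sum, hpre]
          simp [Nat.card_Icc]
  set L : ℝ := Real.log (2 / δ) with hL
  set B : ℝ := pre + L with hB
  have hexpL : Real.exp L = 2 / δ := Real.exp_log (by positivity)
  -- event inclusion
  have hsub : {ω | (α / n) * ∑ i ∈ Finset.Icc 1 n, ψ (X i ω / α) - μbar ≥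
        M / (2 * α) + (α / n) * Real.log (2 / δ)}
      ⊆ {ω | Real.exp B ≤ ∏ t ∈ Finset.Icc 1 n, W t ω} := by
    intro ω hω
    simp only [Set.mem_setOf_eq, ge_iff_le] at hω ⊢
    set S : ℝ := ∑ i ∈ Finset.Icc 1 n, ψ (X i ω / α) with hS
    have h1 : μbar + (M / (2 * α) + (α / n) * L) ≤ (α / n) * S := by
      rw [hL]; linarith
    have h2 : ((n : ℝ) / α) * (μbar + (M / (2 * α) + (α / n) * L))
        ≤ ((n : ℝ) / α) * ((α / n) * S) :=
      mul_le_mul_of_nonneg_left h1 (by positivity)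
    have h3 : ((n : ℝ) / α) * ((α / n) * S) = S := by field_simp
    have h4 : ((n : ℝ) / α) * (μbar + (M / (2 * α) + (α / n) * L)) = B := by
      rw [hμbar, hB, hpre, hβ]; field_simp; ring
    have hSB : B ≤ S := by rw [← h3, ← h4]; exact h2
    have hprodexp : ∏ t ∈ Finset.Icc 1 n, W t ω = Real.exp S := by
      rw [hS, Real.exp_sum]
    rw [hprodexp]
    exact Real.exp_le_exp.2 hSB
  -- Markov
  have hmark := mul_meas_ge_le_integral_of_nonneg (μ := P)
    (ae_of_all _ fun ω => Finset.prod_nonneg fun t _ => hW0 t ω) hIntN (Real.exp B)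
  have hEB : ∫ ω, ∏ t ∈ Finset.Icc 1 n, W t ω ∂P ≤ Real.exp B * (δ / 2) := by
    have h1 : Real.exp pre = Real.exp B * (δ / 2) := by
      have h2 : Real.exp B = Real.exp pre * (2 / δ) := by rw [hB, Real.exp_add, hexpL]
      have h3 : (2 / δ) * (δ / 2) = 1 := by field_simp
      rw [h2, mul_assoc, h3, mul_one]
    linarith [hLeN, hprod_le]
  have h5 : (P {ω | Real.exp B ≤ ∏ t ∈ Finset.Icc 1 n, W t ω}).toReal ≤ δ / 2 := by
    have h4 : Real.exp B * (P {ω | Real.exp B ≤ ∏ t ∈ Finset.Icc 1 n, W t ω}).toReal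
        ≤ Real.exp B * (δ / 2) := le_trans hmark hEB
    exact le_of_mul_le_mul_left h4 (Real.exp_pos B)
  calc P {ω | (α / n) * ∑ i ∈ Finset.Icc 1 n, ψ (X i ω / α) - μbar ≥
        M / (2 * α) + (α / n) * Real.log (2 / δ)}
      ≤ P {ω | Real.exp B ≤ ∏ t ∈ Finset.Icc 1 n, W t ω} := measure_mono hsub
    _ ≤ ENNReal.ofReal (δ / 2) :=
        (ENNReal.le_ofReal_iff_toReal_le (measure_ne_top P _) (by linarith)).2 h5
end
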